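/- (Batched leakage equation.) Let the batch loss be L(Q,K,V) = Σ_{i=1}^{n} g_i(Q z_i, K z_i, V z_i) for fixed embeddings z_1, …, z_n ∈ ℝ^{c×p} and differentiable g_i : ℝ^{d×p} × ℝ^{d×p} × ℝ^{d×p} → ℝ. Let M_i ∈ ℝ^{c×p} denote the gradient matrix of z ↦ g_i(Qz, Kz, Vz) at z_i. Then Qᵀ(∇_Q L) + Kᵀ(∇_K L) + Vᵀ(∇_V L) = Σ_{i=1}^{n} M_i z_iᵀ; in particular, the shared batch gradients only determine the sum Σ_i M_i z_iᵀ of the per-sample products, not the individual products M_i z_iᵀ. -/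

import Mathlib

/-!
STATEMENT 0 (APRIL, gradients of the self-attention loss w.r.t. Q, K, V).
The loss is `L(Q,K,V,z) = g (Q*z, K*z, V*z)`.  If `g` has gradient matrices
`Gq, Gk, Gv` (w.r.t. its three arguments, via the Frobenius inner product)
at `(Q*z, K*z, V*z)`, then the gradient matrix of `Q ↦ L(Q,K,V,z)` is
`Gq * zᵀ`, and likewise `Gk * zᵀ` for `K` and `Gv * zᵀ` for `V`.
-/

open Matrix

attribute [local instance] Matrix.normedAddCommGroup Matrix.normedSpace

noncomputable section

/-- `G` is the gradient matrix of the scalar function `F` at `X`: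
it represents the Fréchet derivative of `F` at `X` via the Frobenius
inner product, `(dF)(H) = trace (Gᵀ * H)`. -/
def HasGradientMatrixAt {α β : Type*} [Fintype α] [Fintype β]
    (F : Matrix α β ℝ → ℝ) (G : Matrix α β ℝ) (X : Matrix α β ℝ) : Prop :=
  ∃ D : Matrix α β ℝ →L[ℝ] ℝ, HasFDerivAt F D X ∧ ∀ H, D H = Matrix.trace (Gᵀ * H)

/-- `(Gq, Gk, Gv)` are the gradient matrices of `g` with respect to its three
matrix arguments at the point `x = (q, k, v)`, i.e. they represent the Fréchet
derivative of `g` at `x` via the Frobenius inner product. -/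
def HasGradientTripleAt {d p : ℕ}
    (g : Matrix (Fin d) (Fin p) ℝ × Matrix (Fin d) (Fin p) ℝ × Matrix (Fin d) (Fin p) ℝ → ℝ)
    (Gq Gk Gv : Matrix (Fin d) (Fin p) ℝ)
    (x : Matrix (Fin d) (Fin p) ℝ × Matrix (Fin d) (Fin p) ℝ × Matrix (Fin d) (Fin p) ℝ) :
    Prop :=
  ∃ D : (Matrix (Fin d) (Fin p) ℝ × Matrix (Fin d) (Fin p) ℝ × Matrix (Fin d) (Fin p) ℝ) →L[ℝ] ℝ,
    HasFDerivAt g D x ∧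
    ∀ Hq Hk Hv, D (Hq, Hk, Hv) =
      Matrix.trace (Gqᵀ * Hq) + Matrix.trace (Gkᵀ * Hk) + Matrix.trace (Gvᵀ * Hv)

/-!
STATEMENT 8 (batched leakage equation): for the batch loss
`L(Q,K,V) = ∑ i, g i (Q * z i, K * z i, V * z i)` with per-sample input
gradient matrices `M i` (the gradient of `z ↦ g i (Qz, Kz, Vz)` at `z i`),
the shared gradients satisfy
`Qᵀ (∇_Q L) + Kᵀ (∇_K L) + Vᵀ (∇_V L) = ∑ i, M i * (z i)ᵀ`.
-/
lemma trace_inj {α β : Type*} [Fintype α] [Fintype β] [DecidableEq α] [DecidableEq β]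
    (G G' : Matrix α β ℝ)
    (h : ∀ H : Matrix α β ℝ, Matrix.trace (Gᵀ * H) = Matrix.trace (G'ᵀ * H)) : G = G' := by
  ext a b
  have := h (Matrix.single a b 1)
  simpa [Matrix.trace, Matrix.mul_apply, Matrix.single, Matrix.diag, ite_and,
    Finset.sum_ite_eq, Finset.sum_ite_eq'] using this

lemma grad_unique {α β : Type*} [Fintype α] [Fintype β] [DecidableEq α] [DecidableEq β]
    {F : Matrix α β ℝ → ℝ} {G G' X : Matrix α β ℝ}
    (h : HasGradientMatrixAt F G X) (h' : HasGradientMatrixAt F G' X) : G = G' := by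
  obtain ⟨D, hD, hDe⟩ := h
  obtain ⟨D', hD', hDe'⟩ := h'
  have hDD : D = D' := hD.unique hD'
  exact trace_inj G G' fun H => by rw [← hDe H, hDD, hDe' H]

def lmulCLM {a b c : Type*} [Fintype a] [Fintype b] [Fintype c] [DecidableEq b]
    (Q : Matrix a b ℝ) : Matrix b c ℝ →L[ℝ] Matrix a c ℝ :=
  LinearMap.toContinuousLinearMap
    { toFun := fun H => Q * H
      map_add' := fun _ _ => Matrix.mul_add _ _ _
      map_smul' := fun _ _ => (Matrix.mul_smul _ _ _) }

def rmulCLM {a b c : Type*} [Fintype a] [Fintype b] [Fintype c] [DecidableEq b]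
    (z : Matrix b c ℝ) : Matrix a b ℝ →L[ℝ] Matrix a c ℝ :=
  LinearMap.toContinuousLinearMap
    { toFun := fun H => H * z
      map_add' := fun _ _ => Matrix.add_mul _ _ _
      map_smul' := fun _ _ => (Matrix.smul_mul _ _ _) }

@[simp] lemma lmulCLM_apply {a b c : Type*} [Fintype a] [Fintype b] [Fintype c] [DecidableEq b]
    (Q : Matrix a b ℝ) (H : Matrix b c ℝ) : lmulCLM Q H = Q * H := rfl

@[simp] lemma rmulCLM_apply {a b c : Type*} [Fintype a] [Fintype b] [Fintype c] [DecidableEq b]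
    (z : Matrix b c ℝ) (H : Matrix a b ℝ) : rmulCLM (a := a) z H = H * z := rfl

lemma hasFDerivAt_rmul {a b c : Type*} [Fintype a] [Fintype b] [Fintype c] [DecidableEq b]
    (z : Matrix b c ℝ) (X : Matrix a b ℝ) :
    HasFDerivAt (fun H : Matrix a b ℝ => H * z) (rmulCLM z) X := by
  exact (rmulCLM (a := a) z).hasFDerivAt

section main

variable {p c d : ℕ}
  (g : Matrix (Fin d) (Fin p) ℝ × Matrix (Fin d) (Fin p) ℝ × Matrix (Fin d) (Fin p) ℝ → ℝ)
  (Q K V : Matrix (Fin d) (Fin c) ℝ) (z : Matrix (Fin c) (Fin p) ℝ)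
  (Gq Gk Gv : Matrix (Fin d) (Fin p) ℝ)

/-- gradient of `w ↦ g (Qw, Kw, Vw)` -/
lemma grad_comp (h : HasGradientTripleAt g Gq Gk Gv (Q * z, K * z, V * z)) :
    HasGradientMatrixAt (fun w => g (Q * w, K * w, V * w))
      (Qᵀ * Gq + Kᵀ * Gk + Vᵀ * Gv) z := by
  obtain ⟨D, hD, hDe⟩ := h
  set L : Matrix (Fin c) (Fin p) ℝ →L[ℝ]
      (Matrix (Fin d) (Fin p) ℝ × Matrix (Fin d) (Fin p) ℝ × Matrix (Fin d) (Fin p) ℝ) :=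
    (lmulCLM Q).prod ((lmulCLM K).prod (lmulCLM V)) with hL
  refine ⟨D.comp L, ?_, ?_⟩
  · have := hD.comp z (L.hasFDerivAt (x := z))
    exact this
  · intro H
    have : (D.comp L) H = D (Q * H, K * H, V * H) := rfl
    rw [this, hDe]
    simp [Matrix.transpose_add, Matrix.transpose_mul, Matrix.add_mul, Matrix.trace_add,
      Matrix.mul_assoc]

end main

theorem april_batched_leakage {p c d n : ℕ}
    (hp : 0 < p) (hc : 0 < c) (hd : 0 < d) (hn : 0 < n)
    (g : Fin n →
      Matrix (Fin d) (Fin p) ℝ × Matrix (Fin d) (Fin p) ℝ × Matrix (Fin d) (Fin p) ℝ → ℝ)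
    (hg : ∀ i, Differentiable ℝ (g i))
    (Q K V : Matrix (Fin d) (Fin c) ℝ) (z : Fin n → Matrix (Fin c) (Fin p) ℝ)
    (Gq Gk Gv : Fin n → Matrix (Fin d) (Fin p) ℝ)
    (hgrad : ∀ i, HasGradientTripleAt (g i) (Gq i) (Gk i) (Gv i)
      (Q * z i, K * z i, V * z i))
    (M : Fin n → Matrix (Fin c) (Fin p) ℝ)
    (hM : ∀ i, HasGradientMatrixAt (fun w => g i (Q * w, K * w, V * w)) (M i) (z i))
    (GQ GK GV : Matrix (Fin d) (Fin c) ℝ)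
    (hGQ : HasGradientMatrixAt
      (fun Q' => ∑ i, g i (Q' * z i, K * z i, V * z i)) GQ Q)
    (hGK : HasGradientMatrixAt
      (fun K' => ∑ i, g i (Q * z i, K' * z i, V * z i)) GK K)
    (hGV : HasGradientMatrixAt
      (fun V' => ∑ i, g i (Q * z i, K * z i, V' * z i)) GV V) :
    Qᵀ * GQ + Kᵀ * GK + Vᵀ * GV = ∑ i, M i * (z i)ᵀ := by
  classical
  choose D hD hDe using hgrad
  -- M i = Qᵀ Gq i + Kᵀ Gk i + Vᵀ Gv i
  have hMi : ∀ i, M i = Qᵀ * Gq i + Kᵀ * Gk i + Vᵀ * Gv i := fun i =>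
    grad_unique (hM i) (grad_comp (g i) Q K V (z i) (Gq i) (Gk i) (Gv i) ⟨D i, hD i, hDe i⟩)
  -- GQ = ∑ Gq i * (z i)ᵀ
  have hGQ' : HasGradientMatrixAt
      (fun Q' => ∑ i, g i (Q' * z i, K * z i, V * z i)) (∑ i, Gq i * (z i)ᵀ) Q := by
    refine ⟨∑ i, (D i).comp
      ((rmulCLM (z i)).prod (0 : Matrix (Fin d) (Fin c) ℝ →L[ℝ] _)), ?_, ?_⟩
    · apply HasFDerivAt.fun_sum
      intro i _
      have hinner : HasFDerivAt (fun Q' : Matrix (Fin d) (Fin c) ℝ =>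
          (Q' * z i, K * z i, V * z i))
          ((rmulCLM (z i)).prod (0 : Matrix (Fin d) (Fin c) ℝ →L[ℝ] _)) Q :=
        HasFDerivAt.prodMk (hasFDerivAt_rmul (z i) Q) (hasFDerivAt_const (K * z i, V * z i) Q)
      exact (hD i).comp Q hinner
    · intro H
      simp only [ContinuousLinearMap.sum_apply, ContinuousLinearMap.comp_apply,
        ContinuousLinearMap.prod_apply, ContinuousLinearMap.zero_apply, rmulCLM_apply]
      have : ∀ i : Fin n, D i (H * z i, (0 : Matrix (Fin d) (Fin p) ℝ),
          (0 : Matrix (Fin d) (Fin p) ℝ)) = Matrix.trace ((Gq i * (z i)ᵀ)ᵀ * H) := by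
        intro i
        rw [hDe i, Matrix.transpose_mul, Matrix.transpose_transpose]
        simp only [Matrix.mul_zero, Matrix.trace_zero, add_zero, zero_add]
        rw [← Matrix.mul_assoc, Matrix.trace_mul_cycle]
      simp only [show (0 : Matrix (Fin d) (Fin p) ℝ × Matrix (Fin d) (Fin p) ℝ)
        = (0, 0) from rfl]
      simp only [this]
      rw [Matrix.transpose_sum, Matrix.sum_mul, Matrix.trace_sum]
  have hGK' : HasGradientMatrixAt
      (fun K' => ∑ i, g i (Q * z i, K' * z i, V * z i)) (∑ i, Gk i * (z i)ᵀ) K := by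
    refine ⟨∑ i, (D i).comp
      ((0 : Matrix (Fin d) (Fin c) ℝ →L[ℝ] _).prod
        ((rmulCLM (z i)).prod (0 : Matrix (Fin d) (Fin c) ℝ →L[ℝ] _))), ?_, ?_⟩
    · apply HasFDerivAt.fun_sum
      intro i _
      have hinner : HasFDerivAt (fun K' : Matrix (Fin d) (Fin c) ℝ =>
          (Q * z i, K' * z i, V * z i))
          ((0 : Matrix (Fin d) (Fin c) ℝ →L[ℝ] _).prod
            ((rmulCLM (z i)).prod (0 : Matrix (Fin d) (Fin c) ℝ →L[ℝ] _))) K :=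
        HasFDerivAt.prodMk (hasFDerivAt_const (Q * z i) K)
          (HasFDerivAt.prodMk (hasFDerivAt_rmul (z i) K) (hasFDerivAt_const (V * z i) K))
      exact (hD i).comp K hinner
    · intro H
      simp only [ContinuousLinearMap.sum_apply, ContinuousLinearMap.comp_apply,
        ContinuousLinearMap.prod_apply, ContinuousLinearMap.zero_apply, rmulCLM_apply]
      have : ∀ i : Fin n, D i ((0 : Matrix (Fin d) (Fin p) ℝ), H * z i,
          (0 : Matrix (Fin d) (Fin p) ℝ)) = Matrix.trace ((Gk i * (z i)ᵀ)ᵀ * H) := by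
        intro i
        rw [hDe i, Matrix.transpose_mul, Matrix.transpose_transpose]
        simp only [Matrix.mul_zero, Matrix.trace_zero, add_zero, zero_add]
        rw [← Matrix.mul_assoc, Matrix.trace_mul_cycle]
      simp only [this]
      rw [Matrix.transpose_sum, Matrix.sum_mul, Matrix.trace_sum]
  have hGV' : HasGradientMatrixAt
      (fun V' => ∑ i, g i (Q * z i, K * z i, V' * z i)) (∑ i, Gv i * (z i)ᵀ) V := by
    refine ⟨∑ i, (D i).comp
      ((0 : Matrix (Fin d) (Fin c) ℝ →L[ℝ] _).prod
        ((0 : Matrix (Fin d) (Fin c) ℝ →L[ℝ] _).prod (rmulCLM (z i)))), ?_, ?_⟩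
    · apply HasFDerivAt.fun_sum
      intro i _
      have hinner : HasFDerivAt (fun V' : Matrix (Fin d) (Fin c) ℝ =>
          (Q * z i, K * z i, V' * z i))
          ((0 : Matrix (Fin d) (Fin c) ℝ →L[ℝ] _).prod
            ((0 : Matrix (Fin d) (Fin c) ℝ →L[ℝ] _).prod (rmulCLM (z i)))) V :=
        HasFDerivAt.prodMk (hasFDerivAt_const (Q * z i) V)
          (HasFDerivAt.prodMk (hasFDerivAt_const (K * z i) V) (hasFDerivAt_rmul (z i) V))
      exact (hD i).comp V hinner
    · intro H
      simp only [ContinuousLinearMap.sum_apply, ContinuousLinearMap.comp_apply,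
        ContinuousLinearMap.prod_apply, ContinuousLinearMap.zero_apply, rmulCLM_apply]
      have : ∀ i : Fin n, D i ((0 : Matrix (Fin d) (Fin p) ℝ),
          (0 : Matrix (Fin d) (Fin p) ℝ), H * z i) = Matrix.trace ((Gv i * (z i)ᵀ)ᵀ * H) := by
        intro i
        rw [hDe i, Matrix.transpose_mul, Matrix.transpose_transpose]
        simp only [Matrix.mul_zero, Matrix.trace_zero, add_zero, zero_add]
        rw [← Matrix.mul_assoc, Matrix.trace_mul_cycle]
      simp only [this]
      rw [Matrix.transpose_sum, Matrix.sum_mul, Matrix.trace_sum]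
  have eQ : GQ = ∑ i, Gq i * (z i)ᵀ := grad_unique hGQ hGQ'
  have eK : GK = ∑ i, Gk i * (z i)ᵀ := grad_unique hGK hGK'
  have eV : GV = ∑ i, Gv i * (z i)ᵀ := grad_unique hGV hGV'
  rw [eQ, eK, eV]
  rw [Matrix.mul_sum, Matrix.mul_sum, Matrix.mul_sum, ← Finset.sum_add_distrib,
    ← Finset.sum_add_distrib]
  refine Finset.sum_congr rfl fun i _ => ?_
  rw [hMi i]
  simp [Matrix.add_mul, Matrix.mul_assoc]
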